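/- Let p, q, r > 2 be pairwise coprime integers and let n be an integer with n ≤ (p−1)(q−1)(r−1). Then χ(n) = 1 if and only if f(n) ≤ ⌊n/r⌋, where f(n) = x_n·q + y_n·p. -/
import Mathlib


theorem stmt_7 (p q r : ℕ) (hp : 2 < p) (hq : 2 < q) (hr : 2 < r)
    (cpq : Nat.Coprime p q) (cpr : Nat.Coprime p r) (cqr : Nat.Coprime q r)
    (x y z δ : ℤ → ℤ)
    (hrep : ∀ n : ℤ,
      n = x n * ((q : ℤ) * r) + y n * ((p : ℤ) * r) + z n * ((p : ℤ) * q) +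
        δ n * ((p : ℤ) * q * r) ∧
      0 ≤ x n ∧ x n < (p : ℤ) ∧ 0 ≤ y n ∧ y n < (q : ℤ) ∧ 0 ≤ z n ∧ z n < (r : ℤ))
    (χ : ℤ → ℤ) (hχ : ∀ n : ℤ, χ n = if δ n = 0 then 1 else 0)
    (f : ℤ → ℤ) (hf : ∀ n : ℤ, f n = x n * (q : ℤ) + y n * (p : ℤ))
    (n : ℤ) (hn : n ≤ ((p : ℤ) - 1) * ((q : ℤ) - 1) * ((r : ℤ) - 1)) :
    χ n = 1 ↔ f n ≤ ⌊(n : ℚ) / (r : ℚ)⌋ := by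
  obtain ⟨hrepn, hx0, hxp, hy0, hyq, hz0, hzr⟩ := hrep n
  have hp' : (2:ℤ) < p := by exact_mod_cast hp
  have hq' : (2:ℤ) < q := by exact_mod_cast hq
  have hr' : (2:ℤ) < r := by exact_mod_cast hr
  have hr0 : (0:ℚ) < (r:ℚ) := by exact_mod_cast (by omega : 0 < r)
  have hp0 : (0:ℚ) < (p:ℚ) := by exact_mod_cast (by omega : 0 < p)
  have hq0 : (0:ℚ) < (q:ℚ) := by exact_mod_cast (by omega : 0 < q)
  have hz0Q : (0:ℚ) ≤ (z n : ℚ) := by exact_mod_cast hz0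
  have hzrQ : (z n : ℚ) < (r:ℚ) := by exact_mod_cast hzr
  have hQ : (n:ℚ) = (x n : ℚ) * (q*r) + (y n:ℚ)*(p*r) + (z n:ℚ)*(p*q)
      + (δ n:ℚ)*(p*q*r) := by exact_mod_cast hrepn
  have key : ⌊(n:ℚ)/(r:ℚ)⌋ = ⌊((z n * p * q : ℤ) : ℚ)/(r:ℚ)⌋ + (x n * q + y n * p + δ n * (p*q)) := by
    have heq : (n:ℚ)/(r:ℚ)
        = ((z n * p * q : ℤ):ℚ)/(r:ℚ) + ((x n * q + y n * p + δ n * (p*q) : ℤ):ℚ) := by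
      rw [hQ]; push_cast; field_simp; ring
    rw [heq, Int.floor_add_intCast]
  set w := ⌊((z n * p * q : ℤ):ℚ)/(r:ℚ)⌋ with hw
  have hw0 : 0 ≤ w := Int.le_floor.mpr (by push_cast; positivity)
  have hwlt : w < p * q := by
    apply Int.floor_lt.mpr
    rw [div_lt_iff₀ hr0]
    push_cast
    nlinarith [mul_pos hp0 hq0]
  -- δ n ≤ 0
  have h1 : 0 ≤ x n * ((q:ℤ)*r) := mul_nonneg hx0 (by positivity)
  have h2 : 0 ≤ y n * ((p:ℤ)*r) := mul_nonneg hy0 (by positivity)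
  have h3 : 0 ≤ z n * ((p:ℤ)*q) := mul_nonneg hz0 (by positivity)
  have h4 : δ n * ((p:ℤ)*q*r) ≤ n := by linarith [hrepn]
  have h5 : ((p:ℤ)-1)*((q:ℤ)-1)*((r:ℤ)-1) < (p:ℤ)*q*r := by nlinarith
  have hK : (0:ℤ) < (p:ℤ)*q*r := by positivity
  have hδle : δ n ≤ 0 := by
    have : δ n * ((p:ℤ)*q*r) < 1 * ((p:ℤ)*q*r) := by linarith
    have := lt_of_mul_lt_mul_right this (le_of_lt hK)
    omega
  rw [hχ n, hf n, key]
  by_cases h : δ n = 0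
  · rw [if_pos h]
    constructor
    · intro _; rw [h]; linarith
    · intro _; rfl
  · have hδ1 : δ n ≤ -1 := by omega
    rw [if_neg h]
    constructor
    · intro h'; exact absurd h' (by norm_num)
    · intro h'; exfalso
      have hpq : (0:ℤ) < (p:ℤ)*q := by positivity
      have hmul : δ n * ((p:ℤ)*q) ≤ -1 * ((p:ℤ)*q) :=
        mul_le_mul_of_nonneg_right hδ1 hpq.le
      linarith
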